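/- Let $T$ be a relative Rota-Baxter operator on a Leibniz triple system $(\mathfrak{L},\{\cdot,\cdot,\cdot\})$ with respect to a representation $(r,m,l)$ on $V$. Define $l_T(u,v)x = \{Tu,Tv,x\} - T(r(Tv,x)u + m(Tu,x)v)$, $m_T(u,v)x = \{Tu,x,Tv\} - T(l(Tu,x)v + r(x,Tv)u)$, $r_T(u,v)x = \{x,Tu,Tv\} - T(l(x,Tu)v + m(x,Tv)u)$. Then $(r_T,m_T,l_T)$ is a representation of the Leibniz triple system $(V,\{\cdot,\cdot,\cdot\}_T)$ on $\mathfrak{L}$. -/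
import Mathlib


def IsTrilin (K : Type*) [Field K] {L M : Type*} [AddCommGroup L] [Module K L]
    [AddCommGroup M] [Module K M] (t : L → L → L → M) : Prop :=
  (∀ y z, IsLinearMap K fun x => t x y z) ∧ (∀ x z, IsLinearMap K fun y => t x y z) ∧
    (∀ x y, IsLinearMap K fun z => t x y z)

def LTSIdent {L : Type*} [AddCommGroup L] (t : L → L → L → L) : Prop :=
  (∀ a b c d e, t a b (t c d e) =
      t (t a b c) d e - t (t a b d) c e - t (t a b e) c d + t (t a b e) d c) ∧
  (∀ a b c d e, t a (t b c d) e =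
      t (t a b c) d e - t (t a c b) d e - t (t a d b) c e + t (t a d c) b e)

def IsLTS (K : Type*) [Field K] {L : Type*} [AddCommGroup L] [Module K L]
    (t : L → L → L → L) : Prop := IsTrilin K t ∧ LTSIdent t

def sd {L V : Type*} [AddCommGroup L] [AddCommGroup V]
    (t : L → L → L → L) (l m r : L → L → V → V) :
    L × V → L × V → L × V → L × V :=
  fun p q s => (t p.1 q.1 s.1, l p.1 q.1 s.2 + m p.1 s.1 q.2 + r q.1 s.1 p.2)

def IsRep (K : Type*) [Field K] {L V : Type*} [AddCommGroup L] [Module K L]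
    [AddCommGroup V] [Module K V] (t : L → L → L → L) (l m r : L → L → V → V) : Prop :=
  IsLTS K (sd t l m r)

def IsRRB {K : Type*} [Field K] {L V : Type*} [AddCommGroup L] [Module K L]
    [AddCommGroup V] [Module K V] (t : L → L → L → L) (l m r : L → L → V → V)
    (T : V →ₗ[K] L) : Prop :=
  ∀ u v w, t (T u) (T v) (T w) =
    T (l (T u) (T v) w + m (T u) (T w) v + r (T v) (T w) u)

def IsRB {K : Type*} [Field K] {L : Type*} [AddCommGroup L] [Module K L]
    (t : L → L → L → L) (R : L →ₗ[K] L) : Prop :=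
  ∀ x y z, t (R x) (R y) (R z) =
    R (t (R x) (R y) z + t (R x) y (R z) + t x (R y) (R z))

def IsNij {K : Type*} [Field K] {A : Type*} [AddCommGroup A] [Module K A]
    (t : A → A → A → A) (N : A →ₗ[K] A) : Prop :=
  ∀ x y z, t (N x) (N y) (N z) =
    N (t (N x) (N y) z) + N (t x (N y) (N z)) + N (t (N x) y (N z))
      - N (N (t (N x) y z)) - N (N (t x (N y) z)) - N (N (t x y (N z)))
      + N (N (N (t x y z)))

def tT {K : Type*} [Field K] {L V : Type*} [AddCommGroup L] [Module K L]
    [AddCommGroup V] [Module K V]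
    (l m r : L → L → V → V) (T : V →ₗ[K] L) (u v w : V) : V :=
  l (T u) (T v) w + m (T u) (T w) v + r (T v) (T w) u

def lT {K : Type*} [Field K] {L V : Type*} [AddCommGroup L] [Module K L]
    [AddCommGroup V] [Module K V]
    (t : L → L → L → L) (m r : L → L → V → V) (T : V →ₗ[K] L)
    (u v : V) (x : L) : L :=
  t (T u) (T v) x - T (r (T v) x u + m (T u) x v)

def mT {K : Type*} [Field K] {L V : Type*} [AddCommGroup L] [Module K L]
    [AddCommGroup V] [Module K V]
    (t : L → L → L → L) (l r : L → L → V → V) (T : V →ₗ[K] L)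
    (u v : V) (x : L) : L :=
  t (T u) x (T v) - T (l (T u) x v + r x (T v) u)

def rT {K : Type*} [Field K] {L V : Type*} [AddCommGroup L] [Module K L]
    [AddCommGroup V] [Module K V]
    (t : L → L → L → L) (l m : L → L → V → V) (T : V →ₗ[K] L)
    (u v : V) (x : L) : L :=
  t x (T u) (T v) - T (l x (T u) v + m x (T v) u)

section AuxNij
variable {K : Type*} [Field K] {A : Type*} [AddCommGroup A] [Module K A]

def tN (t : A → A → A → A) (N : A →ₗ[K] A) : A → A → A → A :=
  fun a b c => t (N a) (N b) c + t (N a) b (N c) + t a (N b) (N c)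
      - N (t (N a) b c) - N (t a (N b) c) - N (t a b (N c))

set_option maxHeartbeats 10000000 in
lemma nij_deform (t : A → A → A → A) (ht : IsLTS K t) (N : A →ₗ[K] A)
    (hN2 : ∀ x : A, N (N x) = 0)
    (hRB : ∀ x y z, t (N x) (N y) (N z) =
      N (t (N x) (N y) z + t (N x) y (N z) + t x (N y) (N z))) :
    IsLTS K (tN t N) := by
  obtain ⟨⟨ht1, ht2, ht3⟩, h1, h2⟩ := ht
  have hRBq := hRB
  have A1 : ∀ x y u v, t (x + y) u v = t x u v + t y u v := fun x y u v => (ht1 u v).map_add x y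
  have A2 : ∀ x y u v, t u (x + y) v = t u x v + t u y v := fun x y u v => (ht2 u v).map_add x y
  have A3 : ∀ x y u v, t u v (x + y) = t u v x + t u v y := fun x y u v => (ht3 u v).map_add x y
  have S1 : ∀ x y u v, t (x - y) u v = t x u v - t y u v :=
    fun x y u v => (IsLinearMap.mk' _ (ht1 u v)).map_sub x y
  have S2 : ∀ x y u v, t u (x - y) v = t u x v - t u y v :=
    fun x y u v => (IsLinearMap.mk' _ (ht2 u v)).map_sub x y
  have S3 : ∀ x y u v, t u v (x - y) = t u v x - t u v y :=
    fun x y u v => (IsLinearMap.mk' _ (ht3 u v)).map_sub x y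
  have Z1 : ∀ u v, t 0 u v = 0 := fun u v => (IsLinearMap.mk' _ (ht1 u v)).map_zero
  have Z2 : ∀ u v, t u 0 v = 0 := fun u v => (IsLinearMap.mk' _ (ht2 u v)).map_zero
  have Z3 : ∀ u v, t u v 0 = 0 := fun u v => (IsLinearMap.mk' _ (ht3 u v)).map_zero
  have M1 : ∀ (c : K) x u v, t (c • x) u v = c • t x u v := fun c x u v => (ht1 u v).map_smul c x
  have M2 : ∀ (c : K) x u v, t u (c • x) v = c • t u x v := fun c x u v => (ht2 u v).map_smul c x
  have M3 : ∀ (c : K) x u v, t u v (c • x) = c • t u v x := fun c x u v => (ht3 u v).map_smul c x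
  refine ⟨⟨?_, ?_, ?_⟩, ?_, ?_⟩
  · intro y z
    constructor
    · intro p q; simp only [tN, map_add, A1, A2, A3, S1, S2, S3]; abel
    · intro c p; simp only [tN, map_smul, M1, M2, M3, smul_add, smul_sub]
  · intro y z
    constructor
    · intro p q; simp only [tN, map_add, A1, A2, A3, S1, S2, S3]; abel
    · intro c p; simp only [tN, map_smul, M1, M2, M3, smul_add, smul_sub]
  · intro y z
    constructor
    · intro p q; simp only [tN, map_add, A1, A2, A3, S1, S2, S3]; abel
    · intro c p; simp only [tN, map_smul, M1, M2, M3, smul_add, smul_sub]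
  · intro a b c d e
    have E1 : t (N a) b (N (t (N c) (N d) e)) + t (N a) b (N (t (N c) d (N e)))
          + t (N a) b (N (t c (N d) (N e)))
        = t (t (N a) b (N c)) (N d) (N e) - t (t (N a) b (N d)) (N c) (N e)
          - t (t (N a) b (N e)) (N c) (N d) + t (t (N a) b (N e)) (N d) (N c) := by
      rw [← A3, ← A3, ← map_add, ← map_add, ← hRBq c d e, h1]
    have E2 : t a (N b) (N (t (N c) (N d) e)) + t a (N b) (N (t (N c) d (N e)))
          + t a (N b) (N (t c (N d) (N e)))
        = t (t a (N b) (N c)) (N d) (N e) - t (t a (N b) (N d)) (N c) (N e)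
          - t (t a (N b) (N e)) (N c) (N d) + t (t a (N b) (N e)) (N d) (N c) := by
      rw [← A3, ← A3, ← map_add, ← map_add, ← hRBq c d e, h1]
    have E3 : N (t a b (N (t (N c) (N d) e))) + N (t a b (N (t (N c) d (N e))))
          + N (t a b (N (t c (N d) (N e))))
        = N (t (t a b (N c)) (N d) (N e)) - N (t (t a b (N d)) (N c) (N e))
          - N (t (t a b (N e)) (N c) (N d)) + N (t (t a b (N e)) (N d) (N c)) := by
      rw [← map_add, ← map_add, ← A3, ← A3, ← map_add, ← map_add, ← hRBq c d e, h1]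
      simp only [map_add, map_sub]
    simp only [tN, map_add, map_sub, hN2, A1, A2, A3, S1, S2, S3, Z1, Z2, Z3,
        neg_zero, sub_zero, zero_sub, add_zero, zero_add, hRBq, h1, h2]
    linear_combination (norm := abel1) E1 + E2 - E3
  · intro a b c d e
    have F1 : t (N a) (N (t (N b) (N c) d)) e + t (N a) (N (t (N b) c (N d))) e
          + t (N a) (N (t b (N c) (N d))) e
        = (t (N (t (N a) (N b) c)) (N d) e + t (N (t (N a) b (N c))) (N d) e
            + t (N (t a (N b) (N c))) (N d) e)
          - (t (N (t (N a) (N c) b)) (N d) e + t (N (t (N a) c (N b))) (N d) e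
            + t (N (t a (N c) (N b))) (N d) e)
          - (t (N (t (N a) (N d) b)) (N c) e + t (N (t (N a) d (N b))) (N c) e
            + t (N (t a (N d) (N b))) (N c) e)
          + (t (N (t (N a) (N d) c)) (N b) e + t (N (t (N a) d (N c))) (N b) e
            + t (N (t a (N d) (N c))) (N b) e) := by
      rw [← A2, ← A2, ← map_add, ← map_add, ← hRBq b c d, h2]
      simp only [hRBq, map_add, A1]
    have F2 : t a (N (t (N b) (N c) d)) (N e) + t a (N (t (N b) c (N d))) (N e)
          + t a (N (t b (N c) (N d))) (N e)
        = t (t a (N b) (N c)) (N d) (N e) - t (t a (N c) (N b)) (N d) (N e)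
          - t (t a (N d) (N b)) (N c) (N e) + t (t a (N d) (N c)) (N b) (N e) := by
      rw [← A2, ← A2, ← map_add, ← map_add, ← hRBq b c d, h2]
    have F3 : N (t a (N (t (N b) (N c) d)) e) + N (t a (N (t (N b) c (N d))) e)
          + N (t a (N (t b (N c) (N d))) e)
        = N (t (t a (N b) (N c)) (N d) e) - N (t (t a (N c) (N b)) (N d) e)
          - N (t (t a (N d) (N b)) (N c) e) + N (t (t a (N d) (N c)) (N b) e) := by
      rw [← map_add, ← map_add, ← A2, ← A2, ← map_add, ← map_add, ← hRBq b c d, h2]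
      simp only [map_add, map_sub]
    simp only [tN, map_add, map_sub, hN2, A1, A2, A3, S1, S2, S3, Z1, Z2, Z3,
        neg_zero, sub_zero, zero_sub, add_zero, zero_add, hRBq, h1, h2]
    linear_combination (norm := abel1) F1 + F2 - F3

lemma lts_conj {B : Type*} [AddCommGroup B] [Module K B] (e : B ≃ₗ[K] A)
    (t : A → A → A → A) (ht : IsLTS K t) :
    IsLTS K (fun p q s : B => e.symm (t (e p) (e q) (e s))) := by
  obtain ⟨⟨ht1, ht2, ht3⟩, h1, h2⟩ := ht
  have A1 : ∀ x y u v, t (x + y) u v = t x u v + t y u v := fun x y u v => (ht1 u v).map_add x y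
  have A2 : ∀ x y u v, t u (x + y) v = t u x v + t u y v := fun x y u v => (ht2 u v).map_add x y
  have A3 : ∀ x y u v, t u v (x + y) = t u v x + t u v y := fun x y u v => (ht3 u v).map_add x y
  have M1 : ∀ (c : K) x u v, t (c • x) u v = c • t x u v := fun c x u v => (ht1 u v).map_smul c x
  have M2 : ∀ (c : K) x u v, t u (c • x) v = c • t u x v := fun c x u v => (ht2 u v).map_smul c x
  have M3 : ∀ (c : K) x u v, t u v (c • x) = c • t u v x := fun c x u v => (ht3 u v).map_smul c x
  refine ⟨⟨?_, ?_, ?_⟩, ?_, ?_⟩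
  · intro y z
    exact ⟨fun p q => by simp only [map_add, A1], fun c p => by simp only [map_smul, M1]⟩
  · intro y z
    exact ⟨fun p q => by simp only [map_add, A2], fun c p => by simp only [map_smul, M2]⟩
  · intro y z
    exact ⟨fun p q => by simp only [map_add, A3], fun c p => by simp only [map_smul, M3]⟩
  · intro a b c d e'
    simp only [LinearEquiv.apply_symm_apply]
    rw [h1]
    simp only [map_add, map_sub]
  · intro a b c d e'
    simp only [LinearEquiv.apply_symm_apply]
    rw [h2]
    simp only [map_add, map_sub]

end AuxNij
set_option maxHeartbeats 4000000 in
theorem stmt9 {K : Type*} [Field K] {L V : Type*} [AddCommGroup L] [Module K L]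
    [AddCommGroup V] [Module K V]
    (t : L → L → L → L) (l m r : L → L → V → V)
    (hL : IsLTS K t) (hrep : IsRep K t l m r)
    (T : V →ₗ[K] L) (hT : IsRRB t l m r T) :
    IsRep K (tT l m r T) (lT t m r T) (mT t l r T) (rT t l m T) := by
  set S := sd t l m r with hS
  have hSlts : IsLTS K S := hrep
  -- N : L×V → L×V, (x,u) ↦ (T u, 0)
  let N : (L × V) →ₗ[K] (L × V) :=
    { toFun := fun p => (T p.2, 0)
      map_add' := by intro p q; simp [Prod.ext_iff]
      map_smul' := by intro c p; simp [Prod.ext_iff] }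
  have Napp : ∀ p : L × V, N p = (T p.2, 0) := fun _ => rfl
  have hN2 : ∀ p : L × V, N (N p) = 0 := by
    intro p; simp [Napp, Prod.ext_iff]
  -- zero identities from trilinearity of sd
  have z1 : ∀ (y z : L) (v w : V), l 0 y w + m 0 z v + r y z 0 = 0 := by
    intro y z v w
    have := congrArg Prod.snd ((IsLinearMap.mk' _ (hSlts.1.1 (y, v) (z, w))).map_zero)
    simpa [hS, sd] using this
  have z2 : ∀ (x z : L) (u w : V), l x 0 w + m x z 0 + r 0 z u = 0 := by
    intro x z u w
    have := congrArg Prod.snd ((IsLinearMap.mk' _ (hSlts.1.2.1 (x, u) (z, w))).map_zero)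
    simpa [hS, sd] using this
  have z3 : ∀ (x y : L) (u v : V), l x y 0 + m x 0 v + r y 0 u = 0 := by
    intro x y u v
    have := congrArg Prod.snd ((IsLinearMap.mk' _ (hSlts.1.2.2 (x, u) (y, v))).map_zero)
    simpa [hS, sd] using this
  have key0 : ∀ x y z : L, l x y 0 + m x z 0 + r y z 0 = 0 := by
    intro x y z
    linear_combination (norm := abel1) z3 x y 0 0 + z2 x z 0 0 + z1 y z 0 0
      - z2 x 0 0 0 - z1 0 z 0 0 - z3 0 y 0 0 + z1 0 0 0 0
  have Tkey0 : ∀ x y z : L, T (l x y 0) + T (m x z 0) + T (r y z 0) = 0 := by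
    intro x y z
    have := congrArg T (key0 x y z)
    simpa [map_add] using this
  have hT' : ∀ u v w, t (T u) (T v) (T w)
      = T (l (T u) (T v) w) + T (m (T u) (T w) v) + T (r (T v) (T w) u) := by
    intro u v w; rw [hT u v w]; simp [map_add]
  -- Rota-Baxter identity for N on the semidirect product
  have hRBS : ∀ p q s : L × V, S (N p) (N q) (N s) =
      N (S (N p) (N q) s + S (N p) q (N s) + S p (N q) (N s)) := by
    intro p q s
    rw [Prod.ext_iff]
    constructor
    · show t (T p.2) (T q.2) (T s.2) = _
      simp only [hS, sd, Napp, Prod.fst_add, Prod.snd_add, map_add]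
      linear_combination (norm := abel1) hT' p.2 q.2 s.2 - Tkey0 (T p.2) (T q.2) s.1
        - Tkey0 (T p.2) q.1 (T s.2) - Tkey0 p.1 (T q.2) (T s.2)
        + Tkey0 (T p.2) (T q.2) (T s.2)
    · show l (T p.2) (T q.2) 0 + m (T p.2) (T s.2) 0 + r (T q.2) (T s.2) 0 = _
      simp only [hS, sd, Napp, Prod.fst_add, Prod.snd_add]
      exact key0 (T p.2) (T q.2) (T s.2)
  have hLTSN : IsLTS K (tN S N) := nij_deform S hSlts N hN2 hRBS
  have Eapp : ∀ p : V × L, (LinearEquiv.prodComm K V L) p = (p.2, p.1) := fun _ => rfl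
  have Esymm : ∀ p : L × V, (LinearEquiv.prodComm K V L).symm p = (p.2, p.1) := fun _ => rfl
  have hconj : IsLTS K (fun p q s : V × L => (LinearEquiv.prodComm K V L).symm
      (tN S N ((LinearEquiv.prodComm K V L) p) ((LinearEquiv.prodComm K V L) q)
        ((LinearEquiv.prodComm K V L) s))) :=
    lts_conj (LinearEquiv.prodComm K V L) (tN S N) hLTSN
  have hfun : sd (tT l m r T) (lT t m r T) (mT t l r T) (rT t l m T)
      = fun p q s : V × L => (LinearEquiv.prodComm K V L).symm
        (tN S N ((LinearEquiv.prodComm K V L) p) ((LinearEquiv.prodComm K V L) q)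
          ((LinearEquiv.prodComm K V L) s)) := by
    funext p q s
    rw [Prod.ext_iff]
    constructor
    · simp only [hS, sd, tN, tT, lT, mT, rT, Napp, Eapp, Esymm, map_add, map_sub,
        Prod.fst_add, Prod.snd_add, Prod.fst_sub, Prod.snd_sub, Prod.fst_zero, Prod.snd_zero]
      linear_combination (norm := abel1) - key0 (T p.1) (T q.1) s.2 - key0 (T p.1) q.2 (T s.1)
        - key0 p.2 (T q.1) (T s.1) + key0 (T p.1) (T q.1) (T s.1)
    · simp only [hS, sd, tN, tT, lT, mT, rT, Napp, Eapp, Esymm, map_add, map_sub,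
        Prod.fst_add, Prod.snd_add, Prod.fst_sub, Prod.snd_sub, Prod.fst_zero, Prod.snd_zero]
      linear_combination (norm := abel1) Tkey0 p.2 q.2 s.2
  show IsLTS K _
  rw [hfun]
  exact hconj
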